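/- For any θ > 0, the sum over n ≥ 1 of 8(n-1)/((n+θ)(n+θ+1)(n+θ-1)) equals 4/(1+θ). -/

import Mathlib

open Filter Topology

/-- For any θ > 0, ∑_{n≥1} 8(n-1)/((n+θ)(n+θ+1)(n+θ-1)) = 4/(1+θ). -/
theorem stmt_2 (θ : ℝ) (hθ : 0 < θ) :
    ∑' n : ℕ, 8 * (((n : ℝ) + 1) - 1) /
      (((n : ℝ) + 1 + θ) * ((n : ℝ) + 1 + θ + 1) * ((n : ℝ) + 1 + θ - 1)) = 4 / (1 + θ) := by
  set F : ℕ → ℝ := fun n => (8 * n + 4 * θ) / (((n : ℝ) + θ) * ((n : ℝ) + 1 + θ)) with hFdef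
  have hpos : ∀ n : ℕ, (0:ℝ) < (n : ℝ) + θ := fun n => by positivity
  have hterm : ∀ n : ℕ, 8 * (((n : ℝ) + 1) - 1) /
      (((n : ℝ) + 1 + θ) * ((n : ℝ) + 1 + θ + 1) * ((n : ℝ) + 1 + θ - 1))
      = F n - F (n + 1) := by
    intro n
    have h0 : ((n : ℝ) + θ) ≠ 0 := (hpos n).ne'
    have h1 : ((n : ℝ) + 1 + θ) ≠ 0 := by positivity
    have h2 : ((n : ℝ) + 2 + θ) ≠ 0 := by positivity
    have e1 : (n:ℝ) + 1 + θ - 1 = (n:ℝ) + θ := by ring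
    simp only [hFdef, Nat.cast_add, Nat.cast_one, e1]
    rw [div_sub_div _ _ (by positivity) (by positivity),
      div_eq_div_iff (by positivity) (by positivity)]
    ring
  have hnonneg : ∀ n : ℕ, 0 ≤ 8 * (((n : ℝ) + 1) - 1) /
      (((n : ℝ) + 1 + θ) * ((n : ℝ) + 1 + θ + 1) * ((n : ℝ) + 1 + θ - 1)) := by
    intro n
    have : (0:ℝ) ≤ (n:ℝ) := n.cast_nonneg
    apply div_nonneg (by linarith)
    have : (0:ℝ) < (n : ℝ) + 1 + θ - 1 := by linarith [hpos n]
    positivity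
  have hF0 : F 0 = 4 / (1 + θ) := by
    simp only [hFdef, Nat.cast_zero]
    rw [div_eq_div_iff (by positivity) (by positivity)]
    ring
  have hFlim : Tendsto F atTop (𝓝 0) := by
    have h1 : Tendsto (fun n : ℕ => (n : ℝ) + θ) atTop atTop :=
      tendsto_atTop_add_const_right atTop θ tendsto_natCast_atTop_atTop
    have h2 : Tendsto (fun n : ℕ => (n : ℝ) + 1 + θ) atTop atTop :=
      tendsto_atTop_add_const_right atTop θ
        (tendsto_atTop_add_const_right atTop 1 tendsto_natCast_atTop_atTop)
    have ha : Tendsto (fun n : ℕ => 8 / ((n : ℝ) + 1 + θ)) atTop (𝓝 0) :=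
      tendsto_const_nhds.div_atTop h2
    have hb : Tendsto (fun n : ℕ => 4 * θ / (((n : ℝ) + θ) * ((n : ℝ) + 1 + θ))) atTop (𝓝 0) :=
      tendsto_const_nhds.div_atTop (h1.atTop_mul_atTop₀ h2)
    have heq : ∀ n : ℕ, F n = 8 / ((n : ℝ) + 1 + θ)
        - 4 * θ / (((n : ℝ) + θ) * ((n : ℝ) + 1 + θ)) := by
      intro n
      have h0 : ((n : ℝ) + θ) ≠ 0 := (hpos n).ne'
      have h1' : ((n : ℝ) + 1 + θ) ≠ 0 := by positivity
      simp only [hFdef]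
      field_simp
      ring
    rw [show (0:ℝ) = 0 - 0 by ring]
    exact (ha.sub hb).congr (fun n => (heq n).symm)
  have hsum : HasSum (fun n : ℕ => 8 * (((n : ℝ) + 1) - 1) /
      (((n : ℝ) + 1 + θ) * ((n : ℝ) + 1 + θ + 1) * ((n : ℝ) + 1 + θ - 1))) (4 / (1 + θ)) := by
    rw [hasSum_iff_tendsto_nat_of_nonneg hnonneg]
    have : ∀ N : ℕ, ∑ n ∈ Finset.range N, 8 * (((n : ℝ) + 1) - 1) /
        (((n : ℝ) + 1 + θ) * ((n : ℝ) + 1 + θ + 1) * ((n : ℝ) + 1 + θ - 1)) = F 0 - F N := by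
      intro N
      rw [← Finset.sum_range_sub' F N]
      exact Finset.sum_congr rfl fun n _ => hterm n
    refine Tendsto.congr (fun N => (this N).symm) ?_
    rw [← hF0]
    simpa using (tendsto_const_nhds (x := F 0)).sub hFlim
  exact hsum.tsum_eq
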